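/- Assume CH (or just: the union of fewer than 2^{ℵ₀} first-category sets is not all of ℝ). Let {D_i : i ∈ J} be countable dense subsets of ℝ with D = ⋃_{i∈J} D_i satisfying |D ∩ P| < 2^{ℵ₀} for every perfect set P. Then there exists Q ⊆ ℝ \ D such that: (A) if P is perfect, P ∩ D ⊆ D_i for some i ∈ J, and D_i is dense in P, then |P ∩ Q| < 2^{ℵ₀}; and (B) if P is perfect, D is dense in P, and for no interval I of P and i ∈ J is P ∩ D ∩ I ⊆ D_i, then P ∩ Q ≠ ∅. -/

import Mathlib

/-- A "perfect set" in Shelah's sense: a closed, nowhere dense subset of `ℝ` with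
no isolated points and at least two points. -/
def ShPerfect (P : Set ℝ) : Prop :=
  Perfect P ∧ IsNowhereDense P ∧ P.Nontrivial

/-- `x` is an inner point of `P`: `x ∈ P` and `P` accumulates at `x` from both sides. -/
def InnerPt (P : Set ℝ) (x : ℝ) : Prop :=
  x ∈ P ∧ ∀ ε : ℝ, 0 < ε →
    (Set.Ioo (x - ε) x ∩ P).Nonempty ∧ (Set.Ioo x (x + ε) ∩ P).Nonempty

/-- `D'` is dense in `P`: between any two inner points of `P` there is an inner point
of `P` belonging to `D'`. -/
def DenseInP (D' P : Set ℝ) : Prop :=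
  ∀ x y : ℝ, InnerPt P x → InnerPt P y → x < y →
    ∃ z : ℝ, z ∈ D' ∧ InnerPt P z ∧ x < z ∧ z < y

open Set Cardinal

lemma perfect_card {C : Set ℝ} (hC : Perfect C) (hne : C.Nonempty) :
    Cardinal.continuum ≤ #C := by
  obtain ⟨f, hf, -, hinj⟩ := hC.exists_nat_bool_injection hne
  calc Cardinal.continuum = #(ℕ → Bool) := by
        simp [Cardinal.mk_arrow, Cardinal.two_power_aleph0]
    _ ≤ #C := Cardinal.mk_le_mk_of_subset hf |>.trans_eq' (Cardinal.mk_range_eq f hinj)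

lemma one_side_countable (P : Set ℝ) :
    {x | x ∈ P ∧ ∃ ε : ℝ, 0 < ε ∧ Set.Ioo (x - ε) x ∩ P = ∅}.Countable := by
  set L := {x | x ∈ P ∧ ∃ ε : ℝ, 0 < ε ∧ Set.Ioo (x - ε) x ∩ P = ∅} with hLdef
  have : ∀ x ∈ L, ∃ q : ℚ, (q : ℝ) < x ∧ Set.Ioo (q : ℝ) x ∩ P = ∅ := by
    rintro x ⟨hxP, ε, hε, hemp⟩
    obtain ⟨q, hq1, hq2⟩ := exists_rat_btwn (show x - ε < x by linarith)
    refine ⟨q, hq2, ?_⟩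
    apply Set.eq_empty_of_subset_empty
    rw [← hemp]
    rintro y ⟨⟨h1, h2⟩, hyP⟩
    exact ⟨⟨by linarith, h2⟩, hyP⟩
  choose! f hf1 hf2 using this
  refine Set.MapsTo.countable_of_injOn (t := (Set.univ : Set ℚ)) (f := f)
    (fun x _ => trivial) ?_ Set.countable_univ
  intro x hx y hy hxy
  by_contra hne
  rcases lt_or_gt_of_ne hne with h | h
  · have : x ∈ Set.Ioo ((f y : ℝ)) y ∩ P := ⟨⟨by rw [← hxy]; exact hf1 x hx, h⟩, hx.1⟩
    rw [hf2 y hy] at this; exact this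
  · have : y ∈ Set.Ioo ((f x : ℝ)) x ∩ P := ⟨⟨by rw [hxy]; exact hf1 y hy, h⟩, hy.1⟩
    rw [hf2 x hx] at this; exact this

lemma one_side_countable' (P : Set ℝ) :
    {x | x ∈ P ∧ ∃ ε : ℝ, 0 < ε ∧ Set.Ioo x (x + ε) ∩ P = ∅}.Countable := by
  have key := one_side_countable (Neg.neg '' P)
  have : {x | x ∈ P ∧ ∃ ε : ℝ, 0 < ε ∧ Set.Ioo x (x + ε) ∩ P = ∅} ⊆
      Neg.neg '' {x | x ∈ Neg.neg '' P ∧ ∃ ε : ℝ, 0 < ε ∧ Set.Ioo (x - ε) x ∩ (Neg.neg '' P) = ∅} := by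
    rintro x ⟨hxP, ε, hε, hemp⟩
    refine ⟨-x, ⟨⟨x, hxP, rfl⟩, ε, hε, ?_⟩, by simp⟩
    apply Set.eq_empty_of_subset_empty
    rintro y ⟨⟨h1, h2⟩, z, hzP, rfl⟩
    have : z ∈ Set.Ioo x (x + ε) ∩ P := ⟨⟨by linarith, by linarith⟩, hzP⟩
    rw [hemp] at this; exact this
  exact (key.image _).mono this

lemma noninner_countable (P : Set ℝ) : {x | x ∈ P ∧ ¬ InnerPt P x}.Countable := by
  apply ((one_side_countable P).union (one_side_countable' P)).mono
  rintro x ⟨hxP, hni⟩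
  simp only [InnerPt, not_and, not_forall] at hni
  obtain ⟨ε, hε, hbad⟩ := hni hxP
  by_cases h : (Set.Ioo (x - ε) x ∩ P).Nonempty
  · exact Or.inr ⟨hxP, ε, hε, Set.not_nonempty_iff_eq_empty.1 (hbad h)⟩
  · exact Or.inl ⟨hxP, ε, hε, Set.not_nonempty_iff_eq_empty.1 h⟩

/-- In any open set meeting a perfect set there are two distinct inner points. -/
lemma exists_two_inner {P : Set ℝ} (hP : Perfect P) {U : Set ℝ} (hU : IsOpen U)
    (hne0 : (P ∩ U).Nonempty) :
    ∃ p q : ℝ, InnerPt P p ∧ InnerPt P q ∧ p ∈ U ∧ q ∈ U ∧ p < q := by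
  obtain ⟨x, hxP, hxU⟩ := hne0
  obtain ⟨δ, hδ, hball⟩ := Metric.isOpen_iff.1 hU x hxU
  set V := Set.Ioo (x - δ/2) (x + δ/2) with hV
  have hxV : x ∈ V := by constructor <;> simp <;> linarith
  obtain ⟨hperf, hne2⟩ := hP.closure_nhds_inter x hxP hxV isOpen_Ioo
  set K := closure (V ∩ P) with hK
  have hKP : K ⊆ P := hP.closed.closure_subset_iff.2 (Set.inter_subset_right)
  have hKU : K ⊆ U := by
    refine Set.Subset.trans ?_ hball
    refine Set.Subset.trans (closure_mono (Set.inter_subset_left)) ?_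
    rw [closure_Ioo (by linarith : x - δ/2 ≠ x + δ/2)]
    intro y hy
    rw [Metric.mem_ball, Real.dist_eq, abs_lt]
    cases' hy with h1 h2
    constructor <;> linarith
  have hcard : Cardinal.continuum ≤ #K := perfect_card hperf hne2
  -- K minus noninner points has at least two points
  set N := {x | x ∈ P ∧ ¬ InnerPt P x} with hN
  have hNc : #N ≤ Cardinal.aleph0 := (noninner_countable P).le_aleph0
  have : ¬ (K ⊆ N ∪ {x}) := by
    intro hsub
    have := (Cardinal.mk_le_mk_of_subset hsub).trans (Cardinal.mk_union_le _ _)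
    have h2 : #N + #({x} : Set ℝ) ≤ Cardinal.aleph0 + 1 := add_le_add hNc (by simp)
    have := hcard.trans (this.trans h2)
    simp at this
    exact absurd this (not_le.2 Cardinal.aleph0_lt_continuum)
  obtain ⟨p, hpK, hpN⟩ := Set.not_subset.1 this
  -- now remove p too
  have : ¬ (K ⊆ N ∪ {x} ∪ {p}) := by
    intro hsub
    have := (Cardinal.mk_le_mk_of_subset hsub).trans (Cardinal.mk_union_le _ _)
    have h2 : #(N ∪ {x} : Set ℝ) + #({p} : Set ℝ) ≤ (Cardinal.aleph0 + 1) + 1 := by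
      refine add_le_add ((Cardinal.mk_union_le _ _).trans (add_le_add hNc (by simp))) (by simp)
    have := hcard.trans (this.trans h2)
    simp at this
    exact absurd this (not_le.2 Cardinal.aleph0_lt_continuum)
  obtain ⟨q, hqK, hqN⟩ := Set.not_subset.1 this
  simp only [Set.mem_union, Set.mem_singleton_iff, not_or] at hpN hqN
  have hpI : InnerPt P p := by
    by_contra h
    exact hpN.1 ⟨hKP hpK, h⟩
  have hqI : InnerPt P q := by
    by_contra h
    exact hqN.1.1 ⟨hKP hqK, h⟩
  have hpq : p ≠ q := fun h => hqN.2 h.symm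
  rcases lt_or_gt_of_ne hpq with h | h
  · exact ⟨p, q, hpI, hqI, hKU hpK, hKU hqK, h⟩
  · exact ⟨q, p, hqI, hpI, hKU hqK, hKU hpK, h⟩


section Gaps

variable (P : Set ℝ) (u v : ℝ)

/-- The type of "gaps" of `P` inside `[u,v]`: pairs of consecutive points of `P`. -/
def GapT : Type :=
  {p : ℝ × ℝ // p.1 ∈ P ∧ p.2 ∈ P ∧ u ≤ p.1 ∧ p.2 ≤ v ∧ p.1 < p.2 ∧ Set.Ioo p.1 p.2 ∩ P = ∅}

variable {P u v}

namespace GapT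

def a (g : GapT P u v) : ℝ := g.1.1
def b (g : GapT P u v) : ℝ := g.1.2

lemma aP (g : GapT P u v) : g.a ∈ P := g.2.1
lemma bP (g : GapT P u v) : g.b ∈ P := g.2.2.1
lemma ua (g : GapT P u v) : u ≤ g.a := g.2.2.2.1
lemma bv (g : GapT P u v) : g.b ≤ v := g.2.2.2.2.1
lemma ab (g : GapT P u v) : g.a < g.b := g.2.2.2.2.2.1
lemma emp (g : GapT P u v) : Set.Ioo g.a g.b ∩ P = ∅ := g.2.2.2.2.2.2

lemma notmem (g : GapT P u v) {x : ℝ} (h1 : g.a < x) (h2 : x < g.b) : x ∉ P := by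
  intro hx
  have : x ∈ Set.Ioo g.a g.b ∩ P := ⟨⟨h1, h2⟩, hx⟩
  rw [g.emp] at this; exact this

lemma a_injective : Function.Injective (fun g : GapT P u v => g.a) := by
  intro g h hab
  simp only at hab
  rcases lt_trichotomy g.b h.b with hlt | heq | hgt
  · exact absurd (h.notmem (hab ▸ g.ab) hlt) (fun c => c g.bP)
  · apply Subtype.ext; exact Prod.ext hab heq
  · exact absurd (g.notmem (hab ▸ h.ab) hgt) (fun c => c h.bP)

noncomputable instance : LinearOrder (GapT P u v) :=
  LinearOrder.lift' (fun g => g.a) a_injective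

lemma lt_iff {g h : GapT P u v} : g < h ↔ g.a < h.a := Iff.rfl
lemma le_iff {g h : GapT P u v} : g ≤ h ↔ g.a ≤ h.a := Iff.rfl

lemma b_le_a {g h : GapT P u v} (hlt : g < h) : g.b ≤ h.a := by
  by_contra hc
  push_neg at hc
  exact g.notmem (lt_iff.1 hlt) hc h.aP

/-- In a perfect set, consecutive gaps cannot share an endpoint. -/
lemma b_lt_a {g h : GapT P u v} (hP : Perfect P) (hlt : g < h) : g.b < h.a := by
  rcases lt_or_eq_of_le (b_le_a hlt) with h' | h'
  · exact h'
  -- shared endpoint w would be isolated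
  exfalso
  have hacc := hP.acc g.b g.bP
  rw [accPt_iff_nhds] at hacc
  have hbb : g.b < h.b := h' ▸ h.ab
  obtain ⟨y, hy, hyP, hyne⟩ :
      ∃ y, y ∈ Set.Ioo g.a h.b ∧ y ∈ P ∧ y ≠ g.b := by
    obtain ⟨y, ⟨hy1, hy2⟩, hy3⟩ := hacc (Set.Ioo g.a h.b) (Ioo_mem_nhds g.ab hbb)
    exact ⟨y, hy1, hy2, hy3⟩
  rcases lt_trichotomy y g.b with hc | hc | hc
  · exact g.notmem hy.1 hc hyP
  · exact hyne hc
  · exact h.notmem (h' ▸ hc) hy.2 hyP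

instance : Countable (GapT P u v) := by
  have : ∀ g : GapT P u v, ∃ q : ℚ, (q:ℝ) ∈ Set.Ioo g.a g.b := by
    intro g
    obtain ⟨q, hq⟩ := exists_rat_btwn g.ab
    exact ⟨q, hq⟩
  choose f hf using this
  have hinj : Function.Injective f := by
    intro g h hgh
    by_contra hne
    rcases lt_or_gt_of_ne hne with hlt | hlt
    · have := b_le_a hlt
      have h1 := (hf g).2
      have h2 := (hf h).1
      rw [hgh] at h1
      linarith
    · have := b_le_a hlt
      have h1 := (hf h).2
      have h2 := (hf g).1
      rw [hgh] at h2
      linarith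
  exact hinj.countable

/-- Construct a gap around a point `z ∉ P` lying between two points of `P ∩ [u,v]`. -/
lemma mk {x y z : ℝ} (hPc : IsClosed P) (hx : x ∈ P) (hy : y ∈ P) (hux : u ≤ x) (hyv : y ≤ v)
    (hxz : x < z) (hzy : z < y) (hz : z ∉ P) :
    ∃ g : GapT P u v, x ≤ g.a ∧ g.b ≤ y ∧ g.a < z ∧ z < g.b := by
  set A := P ∩ Set.Icc x z with hA
  set B := P ∩ Set.Icc z y with hB
  have hAne : A.Nonempty := ⟨x, hx, le_refl x, hxz.le⟩
  have hBne : B.Nonempty := ⟨y, hy, hzy.le, le_refl y⟩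
  have hAc : IsClosed A := hPc.inter isClosed_Icc
  have hBc : IsClosed B := hPc.inter isClosed_Icc
  have hAbdd : BddAbove A := ⟨z, fun w hw => hw.2.2⟩
  have hBbdd : BddBelow B := ⟨z, fun w hw => hw.2.1⟩
  set a := sSup A with ha
  set b := sInf B with hb
  have haA : a ∈ A := hAc.csSup_mem hAne hAbdd
  have hbB : b ∈ B := hBc.csInf_mem hBne hBbdd
  have haz : a < z := lt_of_le_of_ne haA.2.2 (fun h => hz (h ▸ haA.1))
  have hzb : z < b := lt_of_le_of_ne hbB.2.1 (fun h => hz (h.symm ▸ hbB.1))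
  refine ⟨⟨(a, b), haA.1, hbB.1, hux.trans haA.2.1, hbB.2.2.trans hyv, haz.trans hzb, ?_⟩,
    haA.2.1, hbB.2.2, haz, hzb⟩
  apply Set.eq_empty_of_subset_empty
  rintro w ⟨⟨hw1, hw2⟩, hwP⟩
  exfalso
  rcases le_or_gt w z with h | h
  · have : w ∈ A := ⟨hwP, (haA.2.1.trans hw1.le), h⟩
    exact absurd (le_csSup hAbdd this) (not_le.2 hw1)
  · have : w ∈ B := ⟨hwP, h.le, hw2.le.trans hbB.2.2⟩
    exact absurd (csInf_le hBbdd this) (not_le.2 hw2)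

/-- In a closed nowhere dense set, between two of its points there is a point outside. -/
lemma exists_notmem (hPc : IsClosed P) (hnd : IsNowhereDense P) {x y : ℝ} (hxy : x < y) :
    ∃ z, x < z ∧ z < y ∧ z ∉ P := by
  by_contra hc
  push_neg at hc
  have : Set.Ioo x y ⊆ interior (closure P) := by
    rw [hPc.closure_eq]
    exact interior_maximal (fun z hz => hc z hz.1 hz.2) isOpen_Ioo
  rw [hnd] at this
  have hm : (x+y)/2 ∈ Set.Ioo x y := by constructor <;> linarith
  exact absurd (this hm) (Set.notMem_empty _)

section WithHyps

variable (hP : ShPerfect P) (hu : InnerPt P u) (hv : InnerPt P v) (huv : u < v)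
include hP hu hv huv

lemma nonempty' : Nonempty (GapT P u v) := by
  obtain ⟨z, h1, h2, h3⟩ := exists_notmem hP.1.closed hP.2.1 huv
  obtain ⟨g, -⟩ := mk hP.1.closed hu.1 hv.1 (le_refl u) (le_refl v) h1 h2 h3
  exact ⟨g⟩

omit hP hv huv in
lemma u_lt_a (g : GapT P u v) : u < g.a := by
  rcases lt_or_eq_of_le g.ua with h | h
  · exact h
  exfalso
  obtain ⟨w, ⟨hw1, hw2⟩, hwP⟩ := (hu.2 (g.b - u) (by have := g.ab; rw [← h] at *; linarith)).2
  exact g.notmem (h ▸ hw1) (by rw [← h] at *; linarith) hwP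

omit hP hu huv in
lemma b_lt_v (g : GapT P u v) : g.b < v := by
  rcases lt_or_eq_of_le g.bv with h | h
  · exact h
  exfalso
  obtain ⟨w, ⟨hw1, hw2⟩, hwP⟩ := (hv.2 (v - g.a) (by have := g.ab; rw [h] at *; linarith)).1
  refine g.notmem ?_ ?_ hwP
  · linarith
  · rw [h]; exact hw2

omit hu hv huv in
lemma denselyOrdered' : DenselyOrdered (GapT P u v) := by
  constructor
  intro g h hlt
  have hba := b_lt_a hP.1 hlt
  obtain ⟨z, h1, h2, h3⟩ := exists_notmem hP.1.closed hP.2.1 hba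
  obtain ⟨g', hg1, hg2, -⟩ := mk hP.1.closed g.bP h.aP (g.ua.trans g.ab.le)
    (h.ab.le.trans h.bv) h1 h2 h3
  exact ⟨g', lt_iff.2 (lt_of_lt_of_le g.ab hg1), lt_iff.2 (lt_of_lt_of_le g'.ab hg2)⟩

omit hv huv in
lemma noMin' : NoMinOrder (GapT P u v) := by
  constructor
  intro g
  have hua := u_lt_a hu g
  obtain ⟨z, h1, h2, h3⟩ := exists_notmem hP.1.closed hP.2.1 hua
  obtain ⟨g', -, hg2, -⟩ := mk hP.1.closed hu.1 g.aP (le_refl u) (g.ab.le.trans g.bv) h1 h2 h3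
  exact ⟨g', lt_iff.2 (lt_of_lt_of_le g'.ab hg2)⟩

omit hu huv in
lemma noMax' : NoMaxOrder (GapT P u v) := by
  constructor
  intro g
  have hbv := b_lt_v hv g
  obtain ⟨z, h1, h2, h3⟩ := exists_notmem hP.1.closed hP.2.1 hbv
  obtain ⟨g', hg1, -, -⟩ := mk hP.1.closed g.bP hv.1 (g.ua.trans g.ab.le) (le_refl v) h1 h2 h3
  exact ⟨g', lt_iff.2 (lt_of_lt_of_le g.ab hg1)⟩

end WithHyps

end GapT

section CantorFun

variable {P : Set ℝ} {u v : ℝ} (τ : GapT P u v ≃o ↥(Set.Ioo (0:ℚ) 1))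

/-- The real value attached to a gap. -/
noncomputable def gval (g : GapT P u v) : ℝ := ((τ g : ℚ) : ℝ)

lemma gval_pos (g : GapT P u v) : 0 < gval τ g := by
  have := (τ g).2.1
  unfold gval; exact_mod_cast this

lemma gval_lt_one (g : GapT P u v) : gval τ g < 1 := by
  have := (τ g).2.2
  unfold gval; exact_mod_cast this

lemma gval_lt_gval {g h : GapT P u v} : gval τ g < gval τ h ↔ g < h := by
  unfold gval
  rw [Rat.cast_lt]
  exact Subtype.coe_lt_coe.trans τ.lt_iff_lt

lemma gval_surj {q : ℚ} (h0 : 0 < q) (h1 : q < 1) : ∃ g : GapT P u v, gval τ g = (q : ℝ) := by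
  obtain ⟨g, hg⟩ := τ.surjective ⟨q, h0, h1⟩
  exact ⟨g, by unfold gval; rw [hg]⟩

/-- The Cantor-type collapsing function. -/
noncomputable def gfun (x : ℝ) : ℝ :=
  sSup ({0} ∪ (gval τ '' {g : GapT P u v | g.b ≤ x}))

lemma gfun_set_nonempty (x : ℝ) : ({0} ∪ (gval τ '' {g : GapT P u v | g.b ≤ x})).Nonempty :=
  ⟨0, Or.inl rfl⟩

lemma gfun_set_bdd (x : ℝ) : BddAbove ({0} ∪ (gval τ '' {g : GapT P u v | g.b ≤ x})) := by
  refine ⟨1, ?_⟩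
  rintro y (rfl | ⟨g, -, rfl⟩)
  · norm_num
  · exact (gval_lt_one τ g).le

lemma gfun_nonneg (x : ℝ) : 0 ≤ gfun τ x :=
  le_csSup (gfun_set_bdd τ x) (Or.inl rfl)

lemma gfun_le_one (x : ℝ) : gfun τ x ≤ 1 := by
  apply csSup_le (gfun_set_nonempty τ x)
  rintro y (rfl | ⟨g, -, rfl⟩)
  · norm_num
  · exact (gval_lt_one τ g).le

lemma gval_le_gfun {g : GapT P u v} {x : ℝ} (h : g.b ≤ x) : gval τ g ≤ gfun τ x :=
  le_csSup (gfun_set_bdd τ x) (Or.inr ⟨g, h, rfl⟩)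

lemma gfun_le_gval {g : GapT P u v} {x : ℝ} (h : x ≤ g.a) : gfun τ x ≤ gval τ g := by
  apply csSup_le (gfun_set_nonempty τ x)
  rintro y (rfl | ⟨g', hg', rfl⟩)
  · exact (gval_pos τ g).le
  · simp only [Set.mem_setOf_eq] at hg'
    rcases eq_or_ne g' g with rfl | hne
    · exact absurd (hg'.trans h) (not_le.2 g'.ab)
    · refine ((gval_lt_gval τ).2 ?_).le
      rw [GapT.lt_iff]
      calc g'.a < g'.b := g'.ab
        _ ≤ x := hg'
        _ ≤ g.a := h

lemma gfun_surj (hPc : IsClosed P) (huP : u ∈ P) (hvP : v ∈ P) (huv : u ≤ v)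
    {t : ℝ} (ht0 : 0 ≤ t) (ht1 : t ≤ 1) :
    ∃ x, x ∈ P ∧ x ∈ Set.Icc u v ∧ gfun τ x = t := by
  classical
  set A := ({u} ∪ (GapT.b '' {g : GapT P u v | gval τ g < t})) with hA
  have hAne : A.Nonempty := ⟨u, Or.inl rfl⟩
  have hAbdd : BddAbove A := by
    refine ⟨v, ?_⟩
    rintro y (rfl | ⟨g, -, rfl⟩)
    · exact huv
    · exact g.bv
  have hAsub : A ⊆ P ∩ Set.Icc u v := by
    rintro y (rfl | ⟨g, -, rfl⟩)
    · exact ⟨huP, le_refl _, huv⟩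
    · exact ⟨g.bP, g.ua.trans g.ab.le, g.bv⟩
  set x := sSup A with hx
  have hxmem : x ∈ P ∩ Set.Icc u v := by
    have h1 : x ∈ closure A := csSup_mem_closure hAne hAbdd
    have h2 : closure A ⊆ P ∩ Set.Icc u v :=
      closure_minimal hAsub ((hPc.inter isClosed_Icc))
    exact h2 h1
  refine ⟨x, hxmem.1, hxmem.2, le_antisymm ?_ ?_⟩
  · apply csSup_le (gfun_set_nonempty τ x)
    rintro y (rfl | ⟨g, hg, rfl⟩)
    · exact ht0
    · simp only [Set.mem_setOf_eq] at hg
      by_contra hc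
      push_neg at hc
      have hub : g.a ∈ upperBounds A := by
        rintro y (rfl | ⟨g', hg', rfl⟩)
        · exact g.ua
        · simp only [Set.mem_setOf_eq] at hg'
          exact GapT.b_le_a ((gval_lt_gval τ).1 (hg'.trans hc))
      have : x ≤ g.a := csSup_le hAne hub
      have : g.b ≤ g.a := hg.trans this
      exact absurd this (not_le.2 g.ab)
  · by_contra hc
    push_neg at hc
    have h0 : (0:ℝ) ≤ gfun τ x := gfun_nonneg τ x
    obtain ⟨q, hq1, hq2⟩ := exists_rat_btwn hc
    have hq0 : (0:ℝ) < (q:ℝ) := lt_of_le_of_lt h0 hq1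
    have hq1' : (q:ℝ) < 1 := lt_of_lt_of_le hq2 ht1
    obtain ⟨g, hg⟩ := gval_surj τ (by exact_mod_cast hq0) (by exact_mod_cast hq1')
    have hmem : g.b ∈ A := Or.inr ⟨g, by simp only [Set.mem_setOf_eq]; rw [hg]; exact hq2, rfl⟩
    have hbx : g.b ≤ x := le_csSup hAbdd hmem
    have := gval_le_gfun τ hbx
    rw [hg] at this
    exact absurd (lt_of_le_of_lt this hq1) (lt_irrefl _)

end CantorFun

end Gaps

section Meagre

variable {X : Type*} [TopologicalSpace X]

lemma IsNowhereDense.isMeagre' {s : Set X} (hs : IsNowhereDense s) : IsMeagre s := by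
  rw [isMeagre_iff_countable_union_isNowhereDense]
  exact ⟨{s}, by simpa using hs, Set.countable_singleton s, by simp⟩

end Meagre

lemma nwd_translate {s : Set ℝ} (hs : IsNowhereDense s) (c : ℝ) :
    IsNowhereDense ((fun y => y + c) '' s) := by
  have hfun : (fun y : ℝ => y + c) = ⇑(Homeomorph.addRight c) := by
    ext y; simp
  rw [IsNowhereDense, hfun, ← (Homeomorph.addRight c).image_closure,
    ← (Homeomorph.addRight c).image_interior, hs, Set.image_empty]

lemma nwd_singleton (x : ℝ) : IsNowhereDense ({x} : Set ℝ) := by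
  rw [isClosed_singleton.isNowhereDense_iff]
  rw [← Set.subset_empty_iff]
  intro y hy
  rcases eq_or_ne y x with rfl | hne
  · obtain ⟨ε, hε, hball⟩ := Metric.isOpen_iff.1 isOpen_interior y (by assumption)
    have : y + ε/2 ∈ Metric.ball y ε := by
      rw [Metric.mem_ball, Real.dist_eq]
      rw [show y + ε/2 - y = ε/2 by ring, abs_of_nonneg (by linarith : (0:ℝ) ≤ ε/2)]
      linarith
    have := interior_subset (hball this)
    simp at this
    linarith
  · exact absurd (interior_subset hy) hne

/-- A criterion for nowhere density on ℝ. -/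
lemma nwd_of_subintervals {s : Set ℝ}
    (H : ∀ c d : ℝ, c < d → ∃ c' d' : ℝ, c ≤ c' ∧ c' < d' ∧ d' ≤ d ∧ Set.Ioo c' d' ∩ s = ∅) :
    IsNowhereDense s := by
  rw [IsNowhereDense, Set.eq_empty_iff_forall_notMem]
  intro x hx
  rw [mem_interior_iff_mem_nhds, Metric.mem_nhds_iff] at hx
  obtain ⟨ε, hε, hball⟩ := hx
  rw [Real.ball_eq_Ioo] at hball
  obtain ⟨c', d', h1, h2, h3, h4⟩ := H (x - ε) (x + ε) (by linarith)
  set m := (c' + d') / 2 with hm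
  have hmmem : m ∈ Set.Ioo (x - ε) (x + ε) := by
    constructor
    · calc x - ε ≤ c' := h1
        _ < m := by rw [hm]; linarith
    · calc m < d' := by rw [hm]; linarith
        _ ≤ x + ε := h3
  have hmcl : m ∈ closure s := hball hmmem
  rw [mem_closure_iff] at hmcl
  have := hmcl (Set.Ioo c' d') isOpen_Ioo (by constructor <;> (rw [hm]; linarith))
  rw [h4] at this
  exact this.ne_empty rfl

section CovLemma

open GapT

lemma gfun_image_nwd {P : Set ℝ} (hP : ShPerfect P) {u v : ℝ}
    (τ : GapT P u v ≃o ↥(Set.Ioo (0:ℚ) 1))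
    {N : Set ℝ} (hNc : IsClosed N)
    (hnd : ∀ a b : ℝ, (P ∩ Set.Ioo a b).Nonempty → ¬(P ∩ Set.Ioo a b ⊆ N)) :
    IsNowhereDense (gfun τ '' (N ∩ (P ∩ Set.Icc u v))) := by
  apply nwd_of_subintervals
  intro c d hcd
  by_cases hc0 : c < 0
  · refine ⟨c, min d 0, le_refl c, lt_min hcd hc0, min_le_left _ _, ?_⟩
    apply Set.eq_empty_of_subset_empty
    rintro y ⟨⟨-, hy2⟩, x, -, rfl⟩
    have h1 : gfun τ x < 0 := lt_of_lt_of_le hy2 (min_le_right _ _)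
    exact absurd h1 (not_lt.2 (gfun_nonneg τ x))
  by_cases hd1 : 1 < d
  · refine ⟨max c 1, d, le_max_left _ _, max_lt hcd hd1, le_refl d, ?_⟩
    apply Set.eq_empty_of_subset_empty
    rintro y ⟨⟨hy1, -⟩, x, -, rfl⟩
    have h1 : 1 < gfun τ x := lt_of_le_of_lt (le_max_right _ _) hy1
    exact absurd h1 (not_lt.2 (gfun_le_one τ x))
  push_neg at hc0 hd1
  -- main case: 0 ≤ c < d ≤ 1
  set m := (c + d) / 2 with hm
  obtain ⟨q1, hq1c, hq1m⟩ := exists_rat_btwn (show c < m by rw [hm]; linarith)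
  obtain ⟨q2, hq2m, hq2d⟩ := exists_rat_btwn (show m < d by rw [hm]; linarith)
  have hq10 : (0:ℝ) < (q1:ℝ) := lt_of_le_of_lt hc0 hq1c
  have hq11 : (q1:ℝ) < 1 := by
    calc (q1:ℝ) < m := hq1m
      _ < d := by rw [hm]; linarith
      _ ≤ 1 := hd1
  have hq20 : (0:ℝ) < (q2:ℝ) := hq10.trans (by exact_mod_cast hq1m.trans hq2m)
  have hq21 : (q2:ℝ) < 1 := lt_of_lt_of_le hq2d hd1
  obtain ⟨G1, hG1⟩ := gval_surj τ (by exact_mod_cast hq10) (by exact_mod_cast hq11)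
  obtain ⟨G2, hG2⟩ := gval_surj τ (by exact_mod_cast hq20) (by exact_mod_cast hq21)
  have hG12 : G1 < G2 := by
    rw [← gval_lt_gval τ, hG1, hG2]
    exact_mod_cast hq1m.trans hq2m
  set a := G1.b with ha
  set b := G2.a with hb
  have hab : a < b := GapT.b_lt_a hP.1 hG12
  -- P ∩ Ioo a b is nonempty
  have hPIoo : (P ∩ Set.Ioo a b).Nonempty := by
    have hacc := hP.1.acc a G1.bP
    rw [accPt_iff_nhds] at hacc
    obtain ⟨y, hyIoo, hyP, hyne⟩ :
        ∃ y, y ∈ Set.Ioo G1.a b ∧ y ∈ P ∧ y ≠ a := by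
      obtain ⟨y, hy, hyne⟩ := hacc (Set.Ioo G1.a b) (Ioo_mem_nhds G1.ab hab)
      exact ⟨y, hy.1, hy.2, hyne⟩
    rcases lt_trichotomy y a with hc' | hc' | hc'
    · exact absurd hyP (G1.notmem hyIoo.1 hc')
    · exact absurd hc' hyne
    · exact ⟨y, hyP, hc', hyIoo.2⟩
  obtain ⟨w, hwmem, hwN⟩ := Set.not_subset.1 (hnd a b hPIoo)
  set U := Set.Ioo a b ∩ Nᶜ with hU
  have hUopen : IsOpen U := isOpen_Ioo.inter hNc.isOpen_compl
  have hPU : (P ∩ U).Nonempty := ⟨w, hwmem.1, hwmem.2, hwN⟩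
  obtain ⟨p, -, hpI, -, hpU, -, -⟩ := exists_two_inner hP.1 hUopen hPU
  obtain ⟨ε, hε, hball⟩ := Metric.isOpen_iff.1 hUopen p hpU
  rw [Real.ball_eq_Ioo] at hball
  obtain ⟨p1, hp1mem, hp1P⟩ := (hpI.2 ε hε).1
  obtain ⟨p2, hp2mem, hp2P⟩ := (hpI.2 ε hε).2
  have hp1U : p1 ∈ U := hball ⟨hp1mem.1, hp1mem.2.trans (by linarith)⟩
  have hp2U : p2 ∈ U := hball ⟨lt_trans (by linarith) hp2mem.1, hp2mem.2⟩
  have hap1 : a < p1 := hp1U.1.1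
  have hp2b : p2 < b := hp2U.1.2
  have hup1 : u ≤ p1 := le_trans (G1.ua.trans G1.ab.le) hap1.le
  have hpv : p ≤ v := le_trans (hp2mem.1.trans hp2b).le (G2.ab.le.trans G2.bv)
  obtain ⟨z3, hz31, hz32, hz33⟩ := GapT.exists_notmem hP.1.closed hP.2.1 hp1mem.2
  obtain ⟨G3, hG3a, hG3b, -, -⟩ :=
    GapT.mk (u := u) (v := v) hP.1.closed hp1P hpI.1 hup1 hpv hz31 hz32 hz33
  obtain ⟨z4, hz41, hz42, hz43⟩ := GapT.exists_notmem hP.1.closed hP.2.1 hp2mem.1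
  obtain ⟨G4, hG4a, hG4b, -, -⟩ :=
    GapT.mk (u := u) (v := v) hP.1.closed hpI.1 hp2P (hup1.trans hp1mem.2.le)
      (hp2b.le.trans (G2.ab.le.trans G2.bv)) hz41 hz42 hz43
  have hG13 : G1 < G3 := GapT.lt_iff.2 (by
    calc G1.a < G1.b := G1.ab
      _ < p1 := hap1
      _ ≤ G3.a := hG3a)
  have hG34 : G3 < G4 := GapT.lt_iff.2 (by
    calc G3.a < G3.b := G3.ab
      _ ≤ p := hG3b
      _ ≤ G4.a := hG4a)
  have hG42 : G4 < G2 := GapT.lt_iff.2 (by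
    calc G4.a < G4.b := G4.ab
      _ ≤ p2 := hG4b
      _ < G2.a := hp2b)
  refine ⟨gval τ G3, gval τ G4, ?_, (gval_lt_gval τ).2 hG34, ?_, ?_⟩
  · calc c ≤ (q1:ℝ) := hq1c.le
      _ = gval τ G1 := hG1.symm
      _ ≤ gval τ G3 := ((gval_lt_gval τ).2 hG13).le
  · calc gval τ G4 ≤ gval τ G2 := ((gval_lt_gval τ).2 hG42).le
      _ = (q2:ℝ) := hG2
      _ ≤ d := hq2d.le
  · apply Set.eq_empty_of_subset_empty
    rintro y ⟨⟨hy1, hy2⟩, x, ⟨hxN, hxP, -⟩, rfl⟩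
    have hxa : G3.b ≤ x := by
      by_contra hcon
      push_neg at hcon
      rcases le_or_gt x G3.a with h' | h'
      · exact absurd hy1 (not_lt.2 (gfun_le_gval τ h'))
      · exact G3.notmem h' hcon hxP
    have hxb : x < G4.b := by
      by_contra hcon
      push_neg at hcon
      exact absurd hy2 (not_lt.2 (gval_le_gfun τ hcon))
    have hxwin : x ∈ Set.Ioo (p - ε) (p + ε) := by
      constructor
      · calc p - ε < p1 := hp1mem.1
          _ ≤ G3.a := hG3a
          _ < G3.b := G3.ab
          _ ≤ x := hxa
      · calc x < G4.b := hxb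
          _ ≤ p2 := hG4b
          _ < p + ε := hp2mem.2
    exact (hball hxwin).2 hxN

end CovLemma

lemma cov_lemma
    (hcat : ∀ S : Set (Set ℝ), Cardinal.mk ↥S < Cardinal.continuum →
      (∀ A ∈ S, IsMeagre A) → ⋃₀ S ≠ Set.univ)
    (P : Set ℝ) (hP : ShPerfect P)
    (𝒩 : Set (Set ℝ)) (hNcard : #↥𝒩 < Cardinal.continuum)
    (hNc : ∀ N ∈ 𝒩, IsClosed N)
    (hnd : ∀ N ∈ 𝒩, ∀ a b : ℝ, (P ∩ Set.Ioo a b).Nonempty → ¬(P ∩ Set.Ioo a b ⊆ N))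
    (E : Set ℝ) (hE : #↥(E ∩ P) < Cardinal.continuum) :
    ∃ x, x ∈ P ∧ x ∉ ⋃₀ 𝒩 ∧ x ∉ E := by
  classical
  -- two inner points
  have hPne : (P ∩ Set.univ).Nonempty := by
    obtain ⟨x, hx, -⟩ := hP.2.2
    exact ⟨x, hx, trivial⟩
  obtain ⟨u, v, hu, hv, -, -, huv⟩ := exists_two_inner hP.1 isOpen_univ hPne
  -- instances for gaps
  haveI : Nonempty (GapT P u v) := GapT.nonempty' hP hu hv huv
  haveI : DenselyOrdered (GapT P u v) := GapT.denselyOrdered' hP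
  haveI : NoMinOrder (GapT P u v) := GapT.noMin' hP hu
  haveI : NoMaxOrder (GapT P u v) := GapT.noMax' hP hv
  haveI : Nonempty ↥(Set.Ioo (0:ℚ) 1) := ⟨⟨1/2, by norm_num, by norm_num⟩⟩
  haveI : NoMinOrder ↥(Set.Ioo (0:ℚ) 1) := by
    constructor
    rintro ⟨x, hx1, hx2⟩
    refine ⟨⟨x/2, by linarith, by linarith⟩, ?_⟩
    show x/2 < x
    linarith
  haveI : NoMaxOrder ↥(Set.Ioo (0:ℚ) 1) := by
    constructor
    rintro ⟨x, hx1, hx2⟩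
    refine ⟨⟨(x+1)/2, by linarith, by linarith⟩, ?_⟩
    show x < (x+1)/2
    linarith
  obtain ⟨τ⟩ := Order.iso_of_countable_dense (GapT P u v) ↥(Set.Ioo (0:ℚ) 1)
  by_contra hcon
  push_neg at hcon
  -- build the covering family
  set ι := (↥𝒩 ⊕ ↥(E ∩ P)) × ℤ with hι
  set f : ι → Set ℝ := fun i =>
    Sum.rec (fun N => (fun y => y + (i.2 : ℝ)) '' (gfun τ '' ((N : Set ℝ) ∩ (P ∩ Set.Icc u v))))
      (fun e => {gfun τ (e : ℝ) + (i.2 : ℝ)}) i.1 with hf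
  set S := Set.range f with hS
  have hScard : #↥S < Cardinal.continuum := by
    apply lt_of_le_of_lt Cardinal.mk_range_le
    rw [hι]
    rw [Cardinal.mk_prod, Cardinal.mk_sum]
    simp only [Cardinal.lift_id, Cardinal.mk_int]
    apply Cardinal.mul_lt_of_lt Cardinal.aleph0_le_continuum
    · exact Cardinal.add_lt_of_lt Cardinal.aleph0_le_continuum hNcard hE
    · exact Cardinal.aleph0_lt_continuum
  have hSmeagre : ∀ A ∈ S, IsMeagre A := by
    rintro A ⟨⟨i, n⟩, rfl⟩
    rcases i with N | e
    · exact (nwd_translate (gfun_image_nwd hP τ (hNc N N.2) (hnd N N.2)) (n:ℝ)).isMeagre'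
    · exact (nwd_singleton _).isMeagre'
  apply hcat S hScard hSmeagre
  rw [Set.eq_univ_iff_forall]
  intro y
  set n := ⌊y⌋ with hn
  set t := Int.fract y with ht
  have ht0 : 0 ≤ t := Int.fract_nonneg y
  have ht1 : t ≤ 1 := (Int.fract_lt_one y).le
  obtain ⟨x, hxP, hxIcc, hgx⟩ := gfun_surj τ hP.1.closed hu.1 hv.1 huv.le ht0 ht1
  have hyeq : y = gfun τ x + (n : ℝ) := by
    rw [hgx, ht, hn]
    rw [Int.fract]
    ring
  by_cases hx𝒩 : x ∈ ⋃₀ 𝒩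
  · obtain ⟨N, hN𝒩, hxN⟩ := hx𝒩
    refine ⟨f (Sum.inl ⟨N, hN𝒩⟩, n), ⟨(Sum.inl ⟨N, hN𝒩⟩, n), rfl⟩, ?_⟩
    rw [hf]
    exact ⟨gfun τ x, ⟨x, ⟨hxN, hxP, hxIcc⟩, rfl⟩, hyeq.symm⟩
  · have hxE : x ∈ E := hcon x hxP hx𝒩
    refine ⟨f (Sum.inr ⟨x, hxE, hxP⟩, n), ⟨(Sum.inr ⟨x, hxE, hxP⟩, n), rfl⟩, ?_⟩
    rw [hf]
    exact hyeq

/-- Key lemma: a trace of a "type A" set on a "type B" perfect set is nowhere dense in it. -/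
lemma key_nwd {P P' Di D : Set ℝ} (hP : ShPerfect P) (hsub : P' ∩ D ⊆ Di)
    (hB : ∀ a b : ℝ, InnerPt P a → InnerPt P b → a < b → ¬ (P ∩ D ∩ Set.Ioo a b ⊆ Di)) :
    ∀ a b : ℝ, (P ∩ Set.Ioo a b).Nonempty → ¬(P ∩ Set.Ioo a b ⊆ P') := by
  intro a b hne hsub'
  obtain ⟨a', b', ha', hb', ha'U, hb'U, hab'⟩ := exists_two_inner hP.1 isOpen_Ioo hne
  apply hB a' b' ha' hb' hab'
  rintro x ⟨⟨hxP, hxD⟩, hxIoo⟩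
  have hxIoo' : x ∈ Set.Ioo a b := by
    constructor
    · exact lt_trans ha'U.1 hxIoo.1
    · exact lt_trans hxIoo.2 hb'U.2
  exact hsub ⟨hsub' ⟨hxP, hxIoo'⟩, hxD⟩

/-- A family of closed subsets of ℝ has cardinality at most continuum. -/
lemma closed_family_card (𝔄 : Set (Set ℝ)) (h : ∀ A ∈ 𝔄, IsClosed A) :
    #↥𝔄 ≤ Cardinal.continuum := by
  classical
  set F : Set ℝ → Set (ℚ × ℚ) := fun A => {pq | (A ∩ Set.Ioo (pq.1 : ℝ) (pq.2 : ℝ)).Nonempty}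
    with hF
  have hmono : ∀ A B : Set ℝ, IsClosed B → F A ⊆ F B → A ⊆ B := by
    intro A B hBc hFsub x hxA
    by_contra hxB
    have : Bᶜ ∈ nhds x := hBc.isOpen_compl.mem_nhds hxB
    obtain ⟨ε, hε, hball⟩ := Metric.mem_nhds_iff.1 this
    rw [Real.ball_eq_Ioo] at hball
    obtain ⟨p, hp1, hp2⟩ := exists_rat_btwn (show x - ε < x by linarith)
    obtain ⟨q, hq1, hq2⟩ := exists_rat_btwn (show x < x + ε by linarith)
    have hmem : (p, q) ∈ F A := ⟨x, hxA, hp2, hq1⟩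
    obtain ⟨y, hyB, hy1, hy2⟩ := hFsub hmem
    exact hball ⟨lt_trans hp1 hy1, lt_trans hy2 hq2⟩ hyB
  have hinj : Function.Injective (fun A : ↥𝔄 => F A.1) := by
    rintro ⟨A, hA⟩ ⟨B, hB⟩ hAB
    simp only [Subtype.mk_eq_mk]
    simp only at hAB
    exact le_antisymm (hmono A B (h B hB) (le_of_eq hAB)) (hmono B A (h A hA) (le_of_eq hAB.symm))
  calc #↥𝔄 ≤ #(Set (ℚ × ℚ)) := Cardinal.mk_le_of_injective hinj
    _ = 2 ^ #(ℚ × ℚ) := Cardinal.mk_set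
    _ = 2 ^ Cardinal.aleph0 := by
        rw [Cardinal.mk_prod, Cardinal.mkRat]
        simp
    _ = Cardinal.continuum := Cardinal.two_power_aleph0

/-- Index type of size continuum, well-ordered. -/
noncomputable abbrev covIdx : Type := Cardinal.continuum.ord.ToType

/-- (Shelah, Lemma 7.4; uses that ℝ is not the union of `< 2^ℵ₀` meager sets.)
Given countable dense sets `D_i` with union `D` meeting every perfect set in `< 2^ℵ₀`
points, there is `Q ⊆ ℝ \ D` such that (A) `|P ∩ Q| < 2^ℵ₀` whenever `P ∩ D ⊆ D_i`
for some `i` with `D_i` dense in `P`, and (B) `P ∩ Q ≠ ∅` whenever `D` is dense in `P`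
but on no interval of `P` is `P ∩ D` contained in a single `D_i`. -/
theorem exists_Q_for_dense_family
    (hcat : ∀ S : Set (Set ℝ), Cardinal.mk ↥S < Cardinal.continuum →
      (∀ A ∈ S, IsMeagre A) → ⋃₀ S ≠ Set.univ)
    (J : Type) (Dfam : J → Set ℝ)
    (hct : ∀ i : J, (Dfam i).Countable) (hdense : ∀ i : J, Dense (Dfam i))
    (D : Set ℝ) (hD : D = ⋃ i, Dfam i)
    (hsmall : ∀ P : Set ℝ, ShPerfect P → Cardinal.mk ↥(D ∩ P) < Cardinal.continuum) :
    ∃ Q : Set ℝ, Q ⊆ Set.univ \ D ∧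
      (∀ P : Set ℝ, ShPerfect P →
        (∃ i : J, P ∩ D ⊆ Dfam i ∧ DenseInP (Dfam i) P) →
        Cardinal.mk ↥(P ∩ Q) < Cardinal.continuum) ∧
      (∀ P : Set ℝ, ShPerfect P → DenseInP D P →
        (∀ a b : ℝ, InnerPt P a → InnerPt P b → a < b →
          ∀ i : J, ¬ (P ∩ D ∩ Set.Ioo a b ⊆ Dfam i)) →
        (P ∩ Q).Nonempty) := by
  classical
  set 𝔄 : Set (Set ℝ) := {P' | ShPerfect P' ∧ ∃ i : J, P' ∩ D ⊆ Dfam i} with h𝔄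
  set 𝔅 : Set (Set ℝ) := {P | ShPerfect P ∧
      ∀ a b : ℝ, InnerPt P a → InnerPt P b → a < b →
        ∀ i : J, ¬ (P ∩ D ∩ Set.Ioo a b ⊆ Dfam i)} with h𝔅
  have h𝔄card : #↥𝔄 ≤ Cardinal.continuum :=
    closed_family_card 𝔄 (fun A hA => hA.1.1.closed)
  have h𝔅card : #↥𝔅 ≤ Cardinal.continuum :=
    closed_family_card 𝔅 (fun A hA => hA.1.1.closed)
  have hιcard : #covIdx = Cardinal.continuum := Cardinal.mk_ord_toType _
  obtain ⟨eA⟩ : Nonempty (↥𝔄 ↪ covIdx) := by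
    rw [← Cardinal.le_def, hιcard]; exact h𝔄card
  obtain ⟨eB⟩ : Nonempty (↥𝔅 ↪ covIdx) := by
    rw [← Cardinal.le_def, hιcard]; exact h𝔅card
  -- the nowhere dense families
  set 𝒩 : ↥𝔅 → Set (Set ℝ) :=
    fun b => {N | ∃ a : ↥𝔄, eA a ≤ eB b ∧ N = (a : Set ℝ) ∩ (b : Set ℝ)} with h𝒩
  have h𝒩card : ∀ b : ↥𝔅, #↥(𝒩 b) < Cardinal.continuum := by
    intro b
    have hsurj : ∀ N : ↥(𝒩 b), ∃ a : {a : ↥𝔄 // eA a ≤ eB b},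
        (a.1 : Set ℝ) ∩ (b : Set ℝ) = N := by
      rintro ⟨N, a, ha, rfl⟩
      exact ⟨⟨a, ha⟩, rfl⟩
    choose g hg using hsurj
    have h1 : #↥(𝒩 b) ≤ #{a : ↥𝔄 // eA a ≤ eB b} := by
      apply Cardinal.mk_le_of_injective (f := g)
      intro N N' hNN'
      apply Subtype.ext
      rw [← hg N, ← hg N', hNN']
    have h2 : #{a : ↥𝔄 // eA a ≤ eB b} ≤ #{o : covIdx // o ≤ eB b} := by
      apply Cardinal.mk_le_of_injective
        (f := fun a => (⟨eA a.1, a.2⟩ : {o : covIdx // o ≤ eB b}))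
      rintro ⟨a, ha⟩ ⟨a', ha'⟩ haa'
      simp only [Subtype.mk_eq_mk] at haa' ⊢
      exact eA.injective haa'
    have h3 : #{o : covIdx // o ≤ eB b} < Cardinal.continuum := by
      have hsub : {o : covIdx | o ≤ eB b} ⊆ Set.Iio (eB b) ∪ ({eB b} : Set covIdx) := by
        intro o ho
        have ho' : o ≤ eB b := ho
        rcases lt_or_eq_of_le ho' with h | h
        · exact Or.inl h
        · exact Or.inr h
      have h4 : #↥{o : covIdx | o ≤ eB b} ≤ #↥(Set.Iio (eB b)) + 1 := by
        refine (Cardinal.mk_le_mk_of_subset hsub).trans ?_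
        refine (Cardinal.mk_union_le _ _).trans ?_
        simp
      refine lt_of_le_of_lt h4 ?_
      apply Cardinal.add_lt_of_lt Cardinal.aleph0_le_continuum
      · exact Cardinal.mk_Iio_ord_toType (eB b)
      · exact lt_of_lt_of_le Cardinal.one_lt_aleph0 Cardinal.aleph0_le_continuum
    exact lt_of_le_of_lt (h1.trans h2) h3
  -- choose the points
  have hchoice : ∀ b : ↥𝔅, ∃ x, x ∈ (b : Set ℝ) ∧ x ∉ ⋃₀ (𝒩 b) ∧ x ∉ D := by
    intro b
    apply cov_lemma hcat (b : Set ℝ) b.2.1 (𝒩 b) (h𝒩card b)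
    · rintro N ⟨a, -, rfl⟩
      exact (a.2.1.1.closed).inter (b.2.1.1.closed)
    · rintro N ⟨a, -, rfl⟩ x y hne hsub
      obtain ⟨i, hi⟩ := a.2.2
      exact key_nwd b.2.1 hi (fun a' b' ha' hb' hab' => b.2.2 a' b' ha' hb' hab' i) x y hne (hsub.trans Set.inter_subset_left)
    · exact hsmall (b : Set ℝ) b.2.1
  choose qb hq1 hq2 hq3 using hchoice
  refine ⟨Set.range qb, ?_, ?_, ?_⟩
  · rintro x ⟨b, rfl⟩
    exact ⟨trivial, hq3 b⟩
  · -- (A)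
    rintro P hP ⟨i, hi1, hi2⟩
    have hPA : P ∈ 𝔄 := ⟨hP, i, hi1⟩
    set aP : ↥𝔄 := ⟨P, hPA⟩ with haP
    have hmap : ∀ x : ↥(P ∩ Set.range qb), ∃ b : ↥𝔅, qb b = (x : ℝ) := by
      rintro ⟨x, -, b, rfl⟩
      exact ⟨b, rfl⟩
    choose bf hbf using hmap
    have hblt : ∀ x : ↥(P ∩ Set.range qb), eB (bf x) < eA aP := by
      intro x
      by_contra hcon
      push_neg at hcon
      have hN : (aP : Set ℝ) ∩ ((bf x) : Set ℝ) ∈ 𝒩 (bf x) := ⟨aP, hcon, rfl⟩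
      apply hq2 (bf x)
      refine ⟨(aP : Set ℝ) ∩ ((bf x) : Set ℝ), hN, ?_, ?_⟩
      · rw [hbf x]; exact x.2.1
      · exact hq1 (bf x)
    have hinj : Function.Injective (fun x : ↥(P ∩ Set.range qb) =>
        (⟨eB (bf x), hblt x⟩ : {o : covIdx // o < eA aP})) := by
      intro x y hxy
      simp only [Subtype.mk_eq_mk] at hxy
      have := eB.injective hxy
      apply Subtype.ext
      rw [← hbf x, ← hbf y, this]
    calc #↥(P ∩ Set.range qb) ≤ #{o : covIdx // o < eA aP} := Cardinal.mk_le_of_injective hinj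
      _ < Cardinal.continuum := Cardinal.mk_Iio_ord_toType (eA aP)
  · -- (B)
    rintro P hP hdns hnowhere
    have hPB : P ∈ 𝔅 := ⟨hP, hnowhere⟩
    exact ⟨qb ⟨P, hPB⟩, hq1 ⟨P, hPB⟩, ⟨P, hPB⟩, rfl⟩
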